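/- arXiv:2509.12587 — 5 statements merged into one kernel-verified Lean document; each statement's English description precedes it below -/
import Mathlib

section
/- Sample-level part of Proposition 1: For data (z_i, y_i), i = 1,...,n, with 0 < z̄ < 1 and S_yy invertible, the inverse least-squares coefficient satisfies β̂ = z̄(1−z̄) S_yy^{-1} τ̂. Moreover, S_yy = z̄(1−z̄)[τ̂τ̂ᵀ + Σ̂], where Σ̂ = (1−z̄)^{-1} ĉov{Y(1)} + z̄^{-1} ĉov{Y(0)}, so that when Σ̂ is invertible, β̂ = Σ̂^{-1}τ̂ / (1 + τ̂ᵀ Σ̂^{-1} τ̂). Here ĉov{Y(1)} = (n z̄)^{-1} Σ_i z_i (y_i − ȳ(1))(y_i − ȳ(1))ᵀ and ĉov{Y(0)} = (n(1−z̄))^{-1} Σ_i (1−z_i)(y_i − ȳ(0))(y_i − ȳ(0))ᵀ. -/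
open Matrix Finset

lemma sum_expand (n : ℕ) (f g : Fin n → ℝ) (a b : ℝ) :
    ∑ i, (f i - a) * (g i - b) =
      ∑ i, f i * g i - a * ∑ i, g i - b * ∑ i, f i + n * (a * b) := by
  have h : ∀ i, (f i - a) * (g i - b)
      = f i * g i - b * f i - a * g i + a * b := by intro i; ring
  simp only [h]
  rw [Finset.sum_add_distrib, Finset.sum_sub_distrib, Finset.sum_sub_distrib,
    Finset.sum_const, Finset.card_fin, ← Finset.mul_sum, ← Finset.mul_sum,
    nsmul_eq_mul]
  ring

lemma sum_expand_w (n : ℕ) (w f g : Fin n → ℝ) (a b : ℝ) :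
    ∑ i, w i * ((f i - a) * (g i - b)) =
      ∑ i, w i * (f i * g i) - b * ∑ i, w i * f i - a * ∑ i, w i * g i
        + (∑ i, w i) * (a * b) := by
  have h : ∀ i, w i * ((f i - a) * (g i - b))
      = w i * (f i * g i) - b * (w i * f i) - a * (w i * g i) + (a * b) * w i := by
    intro i; ring
  simp only [h]
  rw [Finset.sum_add_distrib, Finset.sum_sub_distrib, Finset.sum_sub_distrib,
    ← Finset.mul_sum, ← Finset.mul_sum, ← Finset.mul_sum]
  ring

lemma vmv_mulVec {L : ℕ} (a b v : Fin L → ℝ) :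
    Matrix.vecMulVec a b *ᵥ v = (b ⬝ᵥ v) • a := by
  funext j
  simp only [Matrix.mulVec, dotProduct, Matrix.vecMulVec_apply,
    Pi.smul_apply, smul_eq_mul, Finset.sum_mul]
  exact Finset.sum_congr rfl fun k _ => by ring

/-- Sample-level part of Proposition 1: equivalence between the inverse least-squares
coefficient `β̂ = S_yy⁻¹ S_yz` and the difference-in-means estimator `τ̂`. -/
theorem inverse_regression_sample_equivalence
    (n L : ℕ) (hn : 0 < n)
    (z : Fin n → ℝ) (y : Fin n → Fin L → ℝ)
    (hz01 : ∀ i, z i = 0 ∨ z i = 1)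
    (zbar : ℝ) (hzbar : zbar = (∑ i, z i) / n)
    (hzpos : 0 < zbar) (hzlt : zbar < 1)
    (ybar : Fin L → ℝ) (hybar : ybar = fun j => (∑ i, y i j) / n)
    (Syy : Matrix (Fin L) (Fin L) ℝ)
    (hSyy : Syy = (n : ℝ)⁻¹ • ∑ i, vecMulVec (y i - ybar) (y i - ybar))
    (Syz : Fin L → ℝ)
    (hSyz : Syz = fun j => (n : ℝ)⁻¹ * ∑ i, (y i j - ybar j) * (z i - zbar))
    (ybar1 ybar0 : Fin L → ℝ)
    (hybar1 : ybar1 = fun j => (∑ i, z i * y i j) / (∑ i, z i))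
    (hybar0 : ybar0 = fun j => (∑ i, (1 - z i) * y i j) / (∑ i, (1 - z i)))
    (τhat : Fin L → ℝ) (hτhat : τhat = ybar1 - ybar0)
    (βhat : Fin L → ℝ) (hβhat : βhat = Syy⁻¹ *ᵥ Syz)
    (cov1 cov0 : Matrix (Fin L) (Fin L) ℝ)
    (hcov1 : cov1 = ((n : ℝ) * zbar)⁻¹ •
      ∑ i, z i • vecMulVec (y i - ybar1) (y i - ybar1))
    (hcov0 : cov0 = ((n : ℝ) * (1 - zbar))⁻¹ •
      ∑ i, (1 - z i) • vecMulVec (y i - ybar0) (y i - ybar0))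
    (Sigmahat : Matrix (Fin L) (Fin L) ℝ)
    (hSigmahat : Sigmahat = (1 - zbar)⁻¹ • cov1 + zbar⁻¹ • cov0)
    (hSyyInv : IsUnit Syy.det) :
    βhat = (zbar * (1 - zbar)) • (Syy⁻¹ *ᵥ τhat) ∧
    Syy = (zbar * (1 - zbar)) • (vecMulVec τhat τhat + Sigmahat) ∧
    (IsUnit Sigmahat.det →
      βhat = (1 + τhat ⬝ᵥ (Sigmahat⁻¹ *ᵥ τhat))⁻¹ • (Sigmahat⁻¹ *ᵥ τhat)) := by
  have hn' : (n : ℝ) ≠ 0 := Nat.cast_ne_zero.mpr hn.ne'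
  have hnpos : (0:ℝ) < n := by exact_mod_cast hn
  have hzne : zbar ≠ 0 := ne_of_gt hzpos
  have h1zpos : 0 < 1 - zbar := by linarith
  have h1zne : (1:ℝ) - zbar ≠ 0 := ne_of_gt h1zpos
  have hcne : zbar * (1 - zbar) ≠ 0 := mul_ne_zero hzne h1zne
  have hs1 : (∑ i, z i) = zbar * n := by rw [hzbar]; field_simp
  have hs1pos : 0 < ∑ i, z i := by rw [hs1]; positivity
  have hs1ne : (∑ i, z i) ≠ 0 := ne_of_gt hs1pos
  have hs0sum : (∑ i, (1 - z i)) = (n : ℝ) - ∑ i, z i := by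
    rw [Finset.sum_sub_distrib, Finset.sum_const, Finset.card_fin, nsmul_eq_mul, mul_one]
  have hs0pos : 0 < (n:ℝ) - ∑ i, z i := by
    rw [hs1]; nlinarith
  have hs0ne : ((n:ℝ) - ∑ i, z i) ≠ 0 := ne_of_gt hs0pos
  have hsplit : ∀ j, (∑ i, y i j) = (∑ i, z i * y i j) + ∑ i, (1 - z i) * y i j := by
    intro j
    rw [← Finset.sum_add_distrib]
    exact Finset.sum_congr rfl fun i _ => by ring
  have hsplit2 : ∀ j k, (∑ i, y i j * y i k) =
      (∑ i, z i * (y i j * y i k)) + ∑ i, (1 - z i) * (y i j * y i k) := by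
    intro j k
    rw [← Finset.sum_add_distrib]
    refine Finset.sum_congr rfl fun i _ => ?_
    rcases hz01 i with h | h <;> rw [h] <;> ring
  -- key quadratic-sum identities using z i ^ 2 = z i
  have hq1 : ∀ j k, (∑ i, z i * y i j * (z i * y i k)) = ∑ i, z i * (y i j * y i k) := by
    intro j k
    refine Finset.sum_congr rfl fun i _ => ?_
    rcases hz01 i with h | h <;> rw [h] <;> ring
  -- Syz = zbar (1-zbar) • τhat
  have hSyzτ : Syz = (zbar * (1 - zbar)) • τhat := by
    funext j
    simp only [hSyz, hτhat, Pi.smul_apply, Pi.sub_apply, smul_eq_mul]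
    rw [sum_expand]
    rw [Finset.sum_congr rfl fun i (_ : i ∈ Finset.univ) => mul_comm (y i j) (z i)]
    simp only [hybar, hybar1, hybar0, hzbar, hs0sum]
    rw [hsplit j]
    field_simp
    ring
  -- Part 2
  have hpart2 : Syy = (zbar * (1 - zbar)) • (vecMulVec τhat τhat + Sigmahat) := by
    ext j k
    simp only [hSyy, hSigmahat, hcov1, hcov0, hτhat, Matrix.smul_apply, Matrix.add_apply,
      Matrix.sum_apply, Matrix.vecMulVec_apply, Pi.sub_apply, Pi.smul_apply, smul_eq_mul]
    rw [sum_expand, sum_expand_w, sum_expand_w]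
    simp only [hybar, hybar1, hybar0, hzbar, hs0sum]
    simp only [hsplit, hsplit2]
    field_simp
    ring
  -- Part 1
  have hpart1 : βhat = (zbar * (1 - zbar)) • (Syy⁻¹ *ᵥ τhat) := by
    rw [hβhat, hSyzτ, Matrix.mulVec_smul]
  refine ⟨hpart1, hpart2, ?_⟩
  -- Part 3
  intro hSd
  set Amat := vecMulVec τhat τhat + Sigmahat with hA
  have hdetA : IsUnit Amat.det := by
    have h := hSyyInv
    rw [hpart2, Matrix.det_smul, isUnit_iff_ne_zero] at h
    rw [isUnit_iff_ne_zero]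
    intro h0; exact h (by rw [h0, mul_zero])
  have hAinv : Syy⁻¹ = (zbar * (1 - zbar))⁻¹ • Amat⁻¹ := by
    apply Matrix.inv_eq_right_inv
    rw [hpart2, Matrix.smul_mul, Matrix.mul_smul, Matrix.mul_nonsing_inv _ hdetA,
      smul_smul, mul_inv_cancel₀ hcne, one_smul]
  have hβA : βhat = Amat⁻¹ *ᵥ τhat := by
    rw [hpart1, hAinv, Matrix.smul_mulVec, smul_smul, mul_inv_cancel₀ hcne, one_smul]
  set v := Sigmahat⁻¹ *ᵥ τhat with hvdef
  set d := 1 + τhat ⬝ᵥ v with hddef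
  have hAv : Amat *ᵥ v = d • τhat := by
    rw [hA, Matrix.add_mulVec, vmv_mulVec, hvdef, Matrix.mulVec_mulVec,
      Matrix.mul_nonsing_inv _ hSd, Matrix.one_mulVec, hddef, add_smul, one_smul, add_comm]
  have hv : v = d • βhat := by
    have h2 := congrArg (fun w => Amat⁻¹ *ᵥ w) hAv
    simp only [Matrix.mulVec_mulVec, Matrix.nonsing_inv_mul _ hdetA, Matrix.one_mulVec,
      Matrix.mulVec_smul] at h2
    rw [h2, hβA]
  have hd : d ≠ 0 := by
    intro h0
    have hv0 : v = 0 := by rw [hv, h0, zero_smul]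
    have : d = 1 := by rw [hddef, hv0, dotProduct_zero, add_zero]
    rw [h0] at this; exact one_ne_zero this.symm
  rw [hv, smul_smul, inv_mul_cancel₀ hd, one_smul]
end

section
/- Population-level part of Proposition 1: Under complete randomization, i.e., Z independent of (Y(1), Y(0)) with treatment probability p = P(Z=1) ∈ (0,1), and assuming cov(Y) is invertible, the population inverse least-squares coefficient satisfies β = var(Z) cov(Y)^{-1} τ. Moreover, cov(Y) = p(1−p)[ττᵀ + Σ], where Σ = (1−p)^{-1} cov{Y(1)} + p^{-1} cov{Y(0)}, so that when Σ is invertible, β = Σ^{-1}τ / (1 + τᵀ Σ^{-1} τ). In particular β = 0 if and only if τ = 0. -/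
open MeasureTheory ProbabilityTheory Matrix

private lemma l2_mul_integrable {Ω : Type*} [MeasurableSpace Ω] {μ : Measure Ω}
    {f g : Ω → ℝ} (hf : MemLp f 2 μ) (hg : MemLp g 2 μ) :
    Integrable (fun ω => f ω * g ω) μ := by
  refine ((hf.integrable_sq.add hg.integrable_sq).div_const 2).mono'
    (hf.1.mul hg.1) (ae_of_all _ fun ω => ?_)
  simp only [Pi.add_apply, Real.norm_eq_abs, abs_mul]
  nlinarith [sq_nonneg (|f ω| - |g ω|), sq_abs (f ω), sq_abs (g ω)]

private lemma integral_center {Ω : Type*} [MeasurableSpace Ω] {μ : Measure Ω}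
    [IsProbabilityMeasure μ] {f g : Ω → ℝ} (c d : ℝ)
    (hf : Integrable f μ) (hg : Integrable g μ)
    (hfg : Integrable (fun ω => f ω * g ω) μ) :
    ∫ ω, (f ω - c) * (g ω - d) ∂μ =
      (∫ ω, f ω * g ω ∂μ) - c * (∫ ω, g ω ∂μ) - d * (∫ ω, f ω ∂μ) + c * d := by
  have h : (fun ω => (f ω - c) * (g ω - d)) =
      fun ω => f ω * g ω + ((-c) * g ω + ((-d) * f ω + c * d)) := by
    funext ω; ring
  have i1 : Integrable (fun ω => (-d) * f ω + c * d) μ :=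
    (hf.const_mul _).add (integrable_const _)
  have i2 : Integrable (fun ω => (-c) * g ω + ((-d) * f ω + c * d)) μ :=
    (hg.const_mul _).add i1
  rw [h, integral_add hfg i2, integral_add (hg.const_mul _) i1,
    integral_add (hf.const_mul _) (integrable_const _),
    integral_const_mul, integral_const_mul, integral_const]
  simp only [measure_univ, ENNReal.toReal_one, probReal_univ, smul_eq_mul, one_mul]
  ring

/-- Population-level part of Proposition 1: under complete randomization,
`β = var(Z) cov(Y)⁻¹ τ`, `cov(Y) = p(1−p)[ττᵀ + Σ]`, and hence
`β = Σ⁻¹τ/(1 + τᵀΣ⁻¹τ)` when `Σ` is invertible; in particular `β = 0 ↔ τ = 0`. -/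
theorem inverse_regression_population_equivalence
    {Ω : Type*} [MeasurableSpace Ω] (μ : Measure Ω) [IsProbabilityMeasure μ]
    (L : ℕ) (Z : Ω → ℝ) (Y1 Y0 : Ω → Fin L → ℝ)
    (hZmeas : Measurable Z) (hY1meas : Measurable Y1) (hY0meas : Measurable Y0)
    (hZ01 : ∀ ω, Z ω = 0 ∨ Z ω = 1)
    (hY1L2 : MemLp Y1 2 μ) (hY0L2 : MemLp Y0 2 μ)
    -- complete randomization: Z ⫫ (Y(1), Y(0))
    (hindep : IndepFun Z (fun ω => (Y1 ω, Y0 ω)) μ)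
    (p : ℝ) (hp : p = (μ {ω | Z ω = 1}).toReal) (hp0 : 0 < p) (hp1 : p < 1)
    -- observed outcome Y = Z Y(1) + (1 − Z) Y(0)
    (Y : Ω → Fin L → ℝ)
    (hY : Y = fun ω j => Z ω * Y1 ω j + (1 - Z ω) * Y0 ω j)
    -- average treatment effect
    (τ : Fin L → ℝ) (hτ : τ = fun j => ∫ ω, (Y1 ω j - Y0 ω j) ∂μ)
    -- moments of the observed data
    (EZ : ℝ) (hEZ : EZ = ∫ ω, Z ω ∂μ)
    (varZ : ℝ) (hvarZ : varZ = ∫ ω, (Z ω - EZ) ^ 2 ∂μ)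
    (EY : Fin L → ℝ) (hEY : EY = fun j => ∫ ω, Y ω j ∂μ)
    (covY : Matrix (Fin L) (Fin L) ℝ)
    (hcovY : covY = Matrix.of fun i j => ∫ ω, (Y ω i - EY i) * (Y ω j - EY j) ∂μ)
    (covYZ : Fin L → ℝ)
    (hcovYZ : covYZ = fun i => ∫ ω, (Y ω i - EY i) * (Z ω - EZ) ∂μ)
    -- population inverse least-squares coefficient
    (β : Fin L → ℝ) (hβ : β = covY⁻¹ *ᵥ covYZ)
    -- covariances of the potential outcomes
    (EY1 EY0 : Fin L → ℝ)
    (hEY1 : EY1 = fun j => ∫ ω, Y1 ω j ∂μ) (hEY0 : EY0 = fun j => ∫ ω, Y0 ω j ∂μ)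
    (covY1 covY0 : Matrix (Fin L) (Fin L) ℝ)
    (hcovY1 : covY1 = Matrix.of fun i j => ∫ ω, (Y1 ω i - EY1 i) * (Y1 ω j - EY1 j) ∂μ)
    (hcovY0 : covY0 = Matrix.of fun i j => ∫ ω, (Y0 ω i - EY0 i) * (Y0 ω j - EY0 j) ∂μ)
    (Sigma : Matrix (Fin L) (Fin L) ℝ)
    (hSigma : Sigma = (1 - p)⁻¹ • covY1 + p⁻¹ • covY0)
    (hcovYInv : IsUnit covY.det) :
    β = varZ • (covY⁻¹ *ᵥ τ) ∧
    covY = (p * (1 - p)) • (vecMulVec τ τ + Sigma) ∧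
    (IsUnit Sigma.det →
      β = (1 + τ ⬝ᵥ (Sigma⁻¹ *ᵥ τ))⁻¹ • (Sigma⁻¹ *ᵥ τ)) ∧
    (β = 0 ↔ τ = 0) := by
  have hpne : p ≠ 0 := ne_of_gt hp0
  have hqne : (1 : ℝ) - p ≠ 0 := by linarith
  have hpqne : p * (1 - p) ≠ 0 := mul_ne_zero hpne hqne
  -- basic facts about Z
  have hZbd : ∀ ω, ‖Z ω‖ ≤ 1 := fun ω => by
    rcases hZ01 ω with h | h <;> simp [h]
  have hZint : Integrable Z μ :=
    (memLp_top_of_bound hZmeas.aestronglyMeasurable 1 (ae_of_all _ hZbd)).integrable le_top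
  -- ∫ Z = p
  have hZind : Z = Set.indicator {ω | Z ω = 1} (fun _ => (1 : ℝ)) := by
    funext ω
    rcases hZ01 ω with h | h
    · rw [h, Set.indicator_apply, if_neg]
      simp only [Set.mem_setOf_eq, h]
      norm_num
    · rw [h, Set.indicator_apply, if_pos]
      simpa [Set.mem_setOf_eq] using h
  have hmeas1 : MeasurableSet {ω | Z ω = 1} := hZmeas (measurableSet_singleton 1)
  have hintZ : ∫ ω, Z ω ∂μ = p := by
    rw [hp]
    conv_lhs => rw [hZind]
    exact integral_indicator_one hmeas1
  have hEZp : EZ = p := by rw [hEZ, hintZ]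
  -- component square-integrability and integrability
  have hA2 : ∀ j, MemLp (fun ω => Y1 ω j) 2 μ := fun j =>
    (ContinuousLinearMap.proj (R := ℝ) (φ := fun _ : Fin L => ℝ) j).comp_memLp' hY1L2
  have hB2 : ∀ j, MemLp (fun ω => Y0 ω j) 2 μ := fun j =>
    (ContinuousLinearMap.proj (R := ℝ) (φ := fun _ : Fin L => ℝ) j).comp_memLp' hY0L2
  have hA1 : ∀ j, Integrable (fun ω => Y1 ω j) μ := fun j => (hA2 j).integrable one_le_two
  have hB1 : ∀ j, Integrable (fun ω => Y0 ω j) μ := fun j => (hB2 j).integrable one_le_two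
  have hAA : ∀ i j, Integrable (fun ω => Y1 ω i * Y1 ω j) μ := fun i j =>
    l2_mul_integrable (hA2 i) (hA2 j)
  have hBB : ∀ i j, Integrable (fun ω => Y0 ω i * Y0 ω j) μ := fun i j =>
    l2_mul_integrable (hB2 i) (hB2 j)
  have hZmul : ∀ {f : Ω → ℝ}, Integrable f μ → Integrable (fun ω => Z ω * f ω) μ :=
    fun hf => hf.bdd_mul hZmeas.aestronglyMeasurable (c := 1) (ae_of_all _ hZbd)
  -- independence-based product expectations
  have Emul : ∀ V : (Fin L → ℝ) × (Fin L → ℝ) → ℝ, Measurable V →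
      Integrable (fun ω => V (Y1 ω, Y0 ω)) μ →
      ∫ ω, Z ω * V (Y1 ω, Y0 ω) ∂μ = p * ∫ ω, V (Y1 ω, Y0 ω) ∂μ := by
    intro V hV hVint
    have hi : IndepFun Z (fun ω => V (Y1 ω, Y0 ω)) μ := by
      have := hindep.comp measurable_id hV
      simpa [Function.comp_def] using this
    have h := hi.integral_mul_eq_mul_integral hZint.1 hVint.1
    simpa [Pi.mul_apply, hintZ] using h
  have hZA : ∀ j, ∫ ω, Z ω * Y1 ω j ∂μ = p * EY1 j := by
    intro j
    have := Emul (fun y => y.1 j) ((measurable_pi_apply j).comp measurable_fst) (hA1 j)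
    rw [hEY1]
    exact this
  have hZB : ∀ j, ∫ ω, Z ω * Y0 ω j ∂μ = p * EY0 j := by
    intro j
    have := Emul (fun y => y.2 j) ((measurable_pi_apply j).comp measurable_snd) (hB1 j)
    rw [hEY0]
    exact this
  have hZAA : ∀ i j, ∫ ω, Z ω * (Y1 ω i * Y1 ω j) ∂μ = p * ∫ ω, Y1 ω i * Y1 ω j ∂μ :=
    fun i j => Emul (fun y => y.1 i * y.1 j)
      (((measurable_pi_apply i).comp measurable_fst).mul
        ((measurable_pi_apply j).comp measurable_fst)) (hAA i j)
  have hZBB : ∀ i j, ∫ ω, Z ω * (Y0 ω i * Y0 ω j) ∂μ = p * ∫ ω, Y0 ω i * Y0 ω j ∂μ :=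
    fun i j => Emul (fun y => y.2 i * y.2 j)
      (((measurable_pi_apply i).comp measurable_snd).mul
        ((measurable_pi_apply j).comp measurable_snd)) (hBB i j)
  -- E[Y]
  have hYdec : ∀ j, (fun ω => Y ω j) =
      fun ω => Z ω * Y1 ω j + (Y0 ω j - Z ω * Y0 ω j) := by
    intro j; funext ω; rw [hY]; ring
  have hSubB : ∀ j, Integrable (fun ω => Y0 ω j - Z ω * Y0 ω j) μ :=
    fun j => (hB1 j).sub (hZmul (hB1 j))
  have hYint : ∀ j, Integrable (fun ω => Y ω j) μ := by
    intro j; rw [hYdec j]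
    exact (hZmul (hA1 j)).add (hSubB j)
  have hEYv : ∀ j, EY j = p * EY1 j + (1 - p) * EY0 j := by
    intro j
    have : ∫ ω, Y ω j ∂μ = p * EY1 j + (1 - p) * EY0 j := by
      rw [hYdec j, integral_add (hZmul (hA1 j)) (hSubB j),
        integral_sub (hB1 j) (hZmul (hB1 j)), hZA j, hZB j]
      have hInt0 : ∫ ω, Y0 ω j ∂μ = EY0 j := by rw [hEY0]
      rw [hInt0]; ring
    rw [hEY]; exact this
  -- τ
  have htau : ∀ j, τ j = EY1 j - EY0 j := by
    intro j
    rw [hτ]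
    simp only
    rw [integral_sub (hA1 j) (hB1 j)]
    rw [hEY1, hEY0]
  -- varZ = p(1-p)
  have hZZ : (fun ω => Z ω * Z ω) = Z := by
    funext ω; rcases hZ01 ω with h | h <;> rw [h] <;> ring
  have hvarZv : varZ = p * (1 - p) := by
    have h : (fun ω => (Z ω - EZ) ^ 2) = fun ω => (Z ω - p) * (Z ω - p) := by
      funext ω; rw [hEZp]; ring
    rw [hvarZ, h, integral_center p p hZint hZint (by rw [hZZ]; exact hZint)]
    rw [hZZ, hintZ]; ring
  -- covYZ = p(1-p) • τ
  have hYZ : ∀ i, (fun ω => Y ω i * Z ω) = fun ω => Z ω * Y1 ω i := by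
    intro i; funext ω
    rcases hZ01 ω with h | h <;> rw [hY] <;> simp only [h] <;> ring
  have hcovYZv : covYZ = (p * (1 - p)) • τ := by
    funext i
    rw [hcovYZ]
    simp only [Pi.smul_apply, smul_eq_mul]
    rw [integral_center (EY i) EZ (hYint i) hZint (by rw [hYZ i]; exact hZmul (hA1 i)),
      hYZ i, hZA i, hintZ, hEZp]
    have h3 : ∫ ω, Y ω i ∂μ = EY i := by rw [hEY]
    rw [h3, hEYv i, htau i]; ring
  -- covY1, covY0 entries
  have hcov1v : ∀ i j, covY1 i j = (∫ ω, Y1 ω i * Y1 ω j ∂μ) - EY1 i * EY1 j := by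
    intro i j
    rw [hcovY1]
    simp only [Matrix.of_apply]
    rw [integral_center (EY1 i) (EY1 j) (hA1 i) (hA1 j) (hAA i j)]
    have hi : ∫ ω, Y1 ω i ∂μ = EY1 i := by rw [hEY1]
    have hj : ∫ ω, Y1 ω j ∂μ = EY1 j := by rw [hEY1]
    rw [hi, hj]; ring
  have hcov0v : ∀ i j, covY0 i j = (∫ ω, Y0 ω i * Y0 ω j ∂μ) - EY0 i * EY0 j := by
    intro i j
    rw [hcovY0]
    simp only [Matrix.of_apply]
    rw [integral_center (EY0 i) (EY0 j) (hB1 i) (hB1 j) (hBB i j)]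
    have hi : ∫ ω, Y0 ω i ∂μ = EY0 i := by rw [hEY0]
    have hj : ∫ ω, Y0 ω j ∂μ = EY0 j := by rw [hEY0]
    rw [hi, hj]; ring
  -- covY entries
  have hYYdec : ∀ i j, (fun ω => Y ω i * Y ω j) =
      fun ω => Z ω * (Y1 ω i * Y1 ω j) +
        (Y0 ω i * Y0 ω j - Z ω * (Y0 ω i * Y0 ω j)) := by
    intro i j; funext ω
    rcases hZ01 ω with h | h <;> rw [hY] <;> simp only [h] <;> ring
  have hSubBB : ∀ i j, Integrable (fun ω => Y0 ω i * Y0 ω j - Z ω * (Y0 ω i * Y0 ω j)) μ :=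
    fun i j => (hBB i j).sub (hZmul (hBB i j))
  have hYYint : ∀ i j, Integrable (fun ω => Y ω i * Y ω j) μ := by
    intro i j; rw [hYYdec i j]
    exact (hZmul (hAA i j)).add (hSubBB i j)
  have hEYY : ∀ i j, ∫ ω, Y ω i * Y ω j ∂μ =
      p * (∫ ω, Y1 ω i * Y1 ω j ∂μ) + (1 - p) * (∫ ω, Y0 ω i * Y0 ω j ∂μ) := by
    intro i j
    rw [hYYdec i j, integral_add (hZmul (hAA i j)) (hSubBB i j),
      integral_sub (hBB i j) (hZmul (hBB i j)), hZAA i j, hZBB i j]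
    ring
  -- claim 2
  have claim2 : covY = (p * (1 - p)) • (vecMulVec τ τ + Sigma) := by
    ext i j
    rw [hcovY]
    simp only [Matrix.of_apply, Matrix.smul_apply, Matrix.add_apply,
      Matrix.vecMulVec_apply, smul_eq_mul]
    rw [integral_center (EY i) (EY j) (hYint i) (hYint j) (hYYint i j), hEYY i j]
    have hi : ∫ ω, Y ω i ∂μ = EY i := by rw [hEY]
    have hj : ∫ ω, Y ω j ∂μ = EY j := by rw [hEY]
    rw [hi, hj, hSigma]
    simp only [Matrix.add_apply, Matrix.smul_apply, smul_eq_mul]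
    rw [hcov1v i j, hcov0v i j, htau i, htau j, hEYv i, hEYv j]
    field_simp
    ring
  -- claim 1
  have claim1 : β = varZ • (covY⁻¹ *ᵥ τ) := by
    rw [hβ, hcovYZv, Matrix.mulVec_smul, hvarZv]
  refine ⟨claim1, claim2, ?_, ?_⟩
  · -- claim 3
    intro hSig
    set A := vecMulVec τ τ + Sigma with hA
    have hdetY : covY.det = (p * (1 - p)) ^ L * A.det := by
      rw [claim2, Matrix.det_smul]
      simp
    have hAdet : IsUnit A.det := by
      rw [isUnit_iff_ne_zero]
      have h := hcovYInv
      rw [isUnit_iff_ne_zero, hdetY] at h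
      intro h0
      exact h (by rw [h0, mul_zero])
    set u := Sigma⁻¹ *ᵥ τ with hu
    set c := τ ⬝ᵥ u with hc
    have hSu : Sigma *ᵥ u = τ := by
      rw [hu, Matrix.mulVec_mulVec, Matrix.mul_nonsing_inv _ hSig, Matrix.one_mulVec]
    have hvv : vecMulVec τ τ *ᵥ u = c • τ := by
      funext i
      simp only [Matrix.mulVec, dotProduct, Matrix.vecMulVec_apply,
        Pi.smul_apply, smul_eq_mul, hc, dotProduct]
      rw [Finset.sum_mul]
      congr 1
      funext j
      ring
    have hAu : A *ᵥ u = (1 + c) • τ := by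
      rw [hA, Matrix.add_mulVec, hvv, hSu, add_smul, one_smul, add_comm]
    have hne : (1 : ℝ) + c ≠ 0 := by
      intro h0
      have h1 : A *ᵥ u = 0 := by rw [hAu, h0, zero_smul]
      have hu0 : u = 0 := by
        have h2 := congrArg (fun v => A⁻¹ *ᵥ v) h1
        simpa [Matrix.mulVec_mulVec, Matrix.nonsing_inv_mul _ hAdet,
          Matrix.one_mulVec, Matrix.mulVec_zero] using h2
      have hτ0 : τ = 0 := by rw [← hSu, hu0, Matrix.mulVec_zero]
      have hc0 : c = 0 := by rw [hc, hu0, dotProduct_zero]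
      rw [hc0] at h0; norm_num at h0
    have hcovinv : covY⁻¹ = (p * (1 - p))⁻¹ • A⁻¹ := by
      apply Matrix.inv_eq_right_inv
      rw [claim2, Matrix.smul_mul, Matrix.mul_smul, smul_smul,
        mul_inv_cancel₀ hpqne, one_smul, Matrix.mul_nonsing_inv _ hAdet]
    have hβA : β = A⁻¹ *ᵥ τ := by
      rw [claim1, hvarZv, hcovinv, Matrix.smul_mulVec, smul_smul,
        mul_inv_cancel₀ hpqne, one_smul]
    have hAτ : A *ᵥ ((1 + c)⁻¹ • u) = τ := by
      rw [Matrix.mulVec_smul, hAu, smul_smul, inv_mul_cancel₀ hne, one_smul]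
    have hfin : A⁻¹ *ᵥ τ = (1 + c)⁻¹ • u := by
      conv_lhs => rw [← hAτ]
      rw [Matrix.mulVec_mulVec, Matrix.nonsing_inv_mul _ hAdet, Matrix.one_mulVec]
    rw [hβA, hfin]
  · -- claim 4
    constructor
    · intro hb0
      have h1 : covY⁻¹ *ᵥ τ = 0 := by
        have := claim1
        rw [hb0, hvarZv] at this
        have h2 := this.symm
        rcases smul_eq_zero.mp h2 with h | h
        · exact absurd h hpqne
        · exact h
      have h3 := congrArg (fun v => covY *ᵥ v) h1
      simpa [Matrix.mulVec_mulVec, Matrix.mul_nonsing_inv _ hcovYInv,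
        Matrix.one_mulVec, Matrix.mulVec_zero] using h3
    · intro ht0
      rw [claim1, ht0, Matrix.mulVec_zero, smul_zero]
end

section
/- Population-level part of Proposition 2: Under stratified randomization, i.e., Z independent of (Y(1), Y(0)) given C, with π_s = P(C=s) > 0 and p_[s] = P(Z=1 | C=s) ∈ (0,1) for all s, and E{cov(Y | C)} invertible, the population coefficient satisfies β_SR = E{var(Z | C)} E{cov(Y | C)}^{-1} τ_SR, where E{var(Z | C)} = Σ_s π_s p_[s](1−p_[s]) and E{cov(Y | C)} = Σ_s π_s [ p_[s](1−p_[s]) τ_[s] τ_[s]ᵀ + p_[s] cov{Y(1) | C=s} + (1−p_[s]) cov{Y(0) | C=s} ]. In particular β_SR = 0 if and only if τ_SR = 0. -/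
open MeasureTheory ProbabilityTheory Matrix Finset

open scoped ENNReal

section aux
variable {Ω : Type*} [MeasurableSpace Ω] {ν : Measure Ω}

lemma myIntMul {f g : Ω → ℝ} (hf : MemLp f 2 ν) (hg : MemLp g 2 ν) :
    Integrable (fun ω => f ω * g ω) ν := by
  have h : MemLp (f • g) 1 ν := hg.smul hf
  exact memLp_one_iff_integrable.mp h

lemma myCondInt (f : Ω → ℝ) (A : Set Ω) :
    ∫ ω, f ω ∂(ν[|A]) = (ν A)⁻¹.toReal * ∫ ω in A, f ω ∂ν := by
  rw [ProbabilityTheory.cond, integral_smul_measure, smul_eq_mul]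

lemma myCondLe (A : Set Ω) : ν[|A] ≤ (ν A)⁻¹ • ν := by
  rw [ProbabilityTheory.cond]
  intro s
  simp only [Measure.smul_apply, smul_eq_mul]
  exact mul_le_mul_right (Measure.restrict_le_self s) _

lemma myNonempty [IsProbabilityMeasure ν] : Nonempty Ω := by
  by_contra h
  have : ν Set.univ = 0 := by simp [Set.univ_eq_empty_iff.mpr (not_nonempty_iff.mp h)]
  simp at this

lemma myMemL2Cond [IsFiniteMeasure ν] {E : Type*} [NormedAddCommGroup E] {f : Ω → E}
    (hf : MemLp f 2 ν) (A : Set Ω) (h0 : ν A ≠ 0) : MemLp f 2 (ν[|A]) :=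
  hf.of_measure_le_smul (c := (ν A)⁻¹) (by simp [h0]) (myCondLe A)
end aux

section strata
variable {Ω : Type*} [MeasurableSpace Ω] {μ : Measure Ω} [IsProbabilityMeasure μ]

omit [IsProbabilityMeasure μ] in
lemma myCondCongr {A : Set Ω} (hA : MeasurableSet A) {f g : Ω → ℝ}
    (h : ∀ ω ∈ A, f ω = g ω) : ∫ ω, f ω ∂(μ[|A]) = ∫ ω, g ω ∂(μ[|A]) := by
  rw [myCondInt, myCondInt, setIntegral_congr_fun hA h]

lemma myStrata {S : ℕ} (C : Ω → Fin S) (hC : Measurable C)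
    (hpos : ∀ s, μ {ω | C ω = s} ≠ 0)
    (f : Ω → ℝ) (hf : Integrable f μ) :
    ∫ ω, f ω ∂μ = ∑ s, (μ {ω | C ω = s}).toReal * ∫ ω, f ω ∂(μ[|{ω | C ω = s}]) := by
  have hAm : ∀ s : Fin S, MeasurableSet {ω | C ω = s} := fun s =>
    hC (measurableSet_singleton s)
  have key : ∀ s : Fin S, (μ {ω | C ω = s}).toReal * ∫ ω, f ω ∂(μ[|{ω | C ω = s}])
      = ∫ ω in {ω | C ω = s}, f ω ∂μ := by
    intro s
    rw [myCondInt, ENNReal.toReal_inv, ← mul_assoc,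
      mul_inv_cancel₀ (ENNReal.toReal_ne_zero.mpr ⟨hpos s, measure_ne_top μ _⟩), one_mul]
  simp_rw [key]
  have hdisj : Pairwise (Function.onFun Disjoint fun s : Fin S => {ω | C ω = s}) := by
    intro s t hst
    exact Set.disjoint_left.mpr (fun ω h1 h2 => hst (h1.symm.trans h2))
  rw [← integral_iUnion_fintype hAm hdisj (fun s => hf.integrableOn)]
  have : ⋃ s : Fin S, {ω | C ω = s} = Set.univ := by ext ω; simp
  rw [this, Measure.restrict_univ]
end strata

section stratum
variable {Ω : Type*} [MeasurableSpace Ω] {ν : Measure Ω} [IsProbabilityMeasure ν]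
  {L : ℕ} {Z : Ω → ℝ} {Y1 Y0 : Ω → Fin L → ℝ}

omit [IsProbabilityMeasure ν] in
lemma myComp (hY1L2 : MemLp Y1 2 ν) (hY1meas : Measurable Y1) (j : Fin L) :
    MemLp (fun ω => Y1 ω j) 2 ν :=
  hY1L2.of_le_mul (c := 1) ((measurable_pi_apply j).comp hY1meas).aestronglyMeasurable
    (ae_of_all _ fun ω => by simpa using norm_le_pi_norm (Y1 ω) j)

omit [IsProbabilityMeasure ν] in
lemma myZint [IsFiniteMeasure ν] (hZmeas : Measurable Z) (hZ01 : ∀ ω, Z ω = 0 ∨ Z ω = 1) :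
    Integrable Z ν := by
  refine (integrable_const (1:ℝ)).mono' hZmeas.aestronglyMeasurable (ae_of_all _ fun ω => ?_)
  rcases hZ01 ω with h | h <;> simp [h]

omit [IsProbabilityMeasure ν] in
lemma myZval (hZmeas : Measurable Z) (hZ01 : ∀ ω, Z ω = 0 ∨ Z ω = 1) :
    ∫ ω, Z ω ∂ν = (ν {ω | Z ω = 1}).toReal := by
  have h : Z = Set.indicator {ω | Z ω = 1} (fun _ => (1:ℝ)) := by
    funext ω
    rcases hZ01 ω with h | h <;> simp [Set.indicator_apply, h]
  have hms : MeasurableSet {ω | Z ω = 1} := hZmeas (measurableSet_singleton 1)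
  rw [integral_congr_ae (ae_of_all _ (fun ω => congrFun h ω)),
    integral_indicator_const _ hms, smul_eq_mul, mul_one]
  rfl

lemma myZvar (hZmeas : Measurable Z) (hZ01 : ∀ ω, Z ω = 0 ∨ Z ω = 1)
    (p : ℝ) (hpZ : ∫ ω, Z ω ∂ν = p) :
    ∫ ω, (Z ω - p)^2 ∂ν = p * (1 - p) := by
  have h : ∀ ω, (Z ω - p)^2 = Z ω * (1 - 2*p) + p^2 := by
    intro ω; rcases hZ01 ω with h | h <;> rw [h] <;> ring
  simp_rw [h]
  rw [integral_add ((myZint hZmeas hZ01).mul_const _) (integrable_const _),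
    integral_mul_const, hpZ, integral_const]
  simp only [measure_univ, ENNReal.toReal_one, probReal_univ, smul_eq_mul, one_mul]
  ring

omit [IsProbabilityMeasure ν] in
lemma myIndepMul (hindep : IndepFun Z (fun ω => (Y1 ω, Y0 ω)) ν)
    (hZmeas : Measurable Z) (hY1meas : Measurable Y1) (hY0meas : Measurable Y0)
    {φ : (Fin L → ℝ) × (Fin L → ℝ) → ℝ} (hφ : Measurable φ) :
    ∫ ω, Z ω * φ (Y1 ω, Y0 ω) ∂ν = (∫ ω, Z ω ∂ν) * ∫ ω, φ (Y1 ω, Y0 ω) ∂ν := by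
  have h := (hindep.comp measurable_id hφ).integral_mul_eq_mul_integral hZmeas.aestronglyMeasurable
    (hφ.comp (hY1meas.prodMk hY0meas)).aestronglyMeasurable
  simpa [Function.comp, Pi.mul_apply] using h

lemma myShift {f g : Ω → ℝ} (hf : MemLp f 2 ν) (hg : MemLp g 2 ν) (a b : ℝ) :
    ∫ ω, (f ω - a) * (g ω - b) ∂ν
      = (∫ ω, (f ω - ∫ x, f x ∂ν) * (g ω - ∫ x, g x ∂ν) ∂ν)
        + ((∫ x, f x ∂ν) - a) * ((∫ x, g x ∂ν) - b) := by
  have hfi := hf.integrable one_le_two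
  have hgi := hg.integrable one_le_two
  have key : ∀ a b : ℝ, ∫ ω, (f ω - a) * (g ω - b) ∂ν
      = (∫ ω, f ω * g ω ∂ν) - a * (∫ x, g x ∂ν) - b * (∫ x, f x ∂ν) + a * b := by
    intro a b
    have h1 : ∀ ω, (f ω - a) * (g ω - b) = f ω * g ω - (a * g ω + (b * f ω - a*b)) := by
      intro ω; ring
    simp_rw [h1]
    rw [integral_sub (myIntMul hf hg)
        (show Integrable (fun ω => a * g ω + (b * f ω - a * b)) ν from
          (hgi.const_mul a).add ((hfi.const_mul b).sub (integrable_const _))),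
      integral_add (show Integrable (fun ω => a * g ω) ν from hgi.const_mul a)
        (show Integrable (fun ω => b * f ω - a * b) ν from
          (hfi.const_mul b).sub (integrable_const _)),
      integral_sub (show Integrable (fun ω => b * f ω) ν from hfi.const_mul b)
        (integrable_const _),
      integral_const_mul, integral_const_mul, integral_const]
    simp only [measure_univ, ENNReal.toReal_one, probReal_univ, smul_eq_mul, one_mul]
    ring
  rw [key, key]
  ring

lemma myZbdd (hZ01 : ∀ ω : Ω, Z ω = 0 ∨ Z ω = 1) : ∃ C, ∀ ω, ‖Z ω‖ ≤ C :=
  ⟨1, fun ω => by rcases hZ01 ω with h | h <;> simp [h]⟩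

lemma myMeanY (hindep : IndepFun Z (fun ω => (Y1 ω, Y0 ω)) ν)
    (hZmeas : Measurable Z) (hY1meas : Measurable Y1) (hY0meas : Measurable Y0)
    (hZ01 : ∀ ω, Z ω = 0 ∨ Z ω = 1)
    (hY1L2 : MemLp Y1 2 ν) (hY0L2 : MemLp Y0 2 ν)
    (p : ℝ) (hpZ : ∫ ω, Z ω ∂ν = p) (j : Fin L) :
    ∫ ω, (Z ω * Y1 ω j + (1 - Z ω) * Y0 ω j) ∂ν
      = p * (∫ ω, Y1 ω j ∂ν) + (1 - p) * (∫ ω, Y0 ω j ∂ν) := by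
  have h1 : ∀ ω, Z ω * Y1 ω j + (1 - Z ω) * Y0 ω j
      = Z ω * (Y1 ω j - Y0 ω j) + Y0 ω j := by intro ω; ring
  have h1i := (myComp hY1L2 hY1meas j).integrable one_le_two
  have h0i := (myComp hY0L2 hY0meas j).integrable one_le_two
  have hd : Integrable (fun ω => Y1 ω j - Y0 ω j) ν := h1i.sub h0i
  have hZd : Integrable (fun ω => Z ω * (Y1 ω j - Y0 ω j)) ν :=
    hd.bdd_mul (c := 1) hZmeas.aestronglyMeasurable
      (ae_of_all _ fun ω => by rcases hZ01 ω with h | h <;> simp [h])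
  simp_rw [h1]
  rw [integral_add hZd h0i,
    myIndepMul hindep hZmeas hY1meas hY0meas
      (φ := fun w => w.1 j - w.2 j) (by fun_prop),
    hpZ, integral_sub h1i h0i]
  ring

lemma myQuad (hindep : IndepFun Z (fun ω => (Y1 ω, Y0 ω)) ν)
    (hZmeas : Measurable Z) (hY1meas : Measurable Y1) (hY0meas : Measurable Y0)
    (hZ01 : ∀ ω, Z ω = 0 ∨ Z ω = 1)
    (hY1L2 : MemLp Y1 2 ν) (hY0L2 : MemLp Y0 2 ν)
    (p : ℝ) (hpZ : ∫ ω, Z ω ∂ν = p) (i j : Fin L) (a b : ℝ) :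
    ∫ ω, ((Z ω * Y1 ω i + (1 - Z ω) * Y0 ω i) - a)
        * ((Z ω * Y1 ω j + (1 - Z ω) * Y0 ω j) - b) ∂ν
      = p * (∫ ω, (Y1 ω i - a) * (Y1 ω j - b) ∂ν)
        + (1 - p) * (∫ ω, (Y0 ω i - a) * (Y0 ω j - b) ∂ν) := by
  have h1 : ∀ ω, ((Z ω * Y1 ω i + (1 - Z ω) * Y0 ω i) - a)
        * ((Z ω * Y1 ω j + (1 - Z ω) * Y0 ω j) - b)
      = Z ω * ((Y1 ω i - a) * (Y1 ω j - b) - (Y0 ω i - a) * (Y0 ω j - b))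
        + (Y0 ω i - a) * (Y0 ω j - b) := by
    intro ω; rcases hZ01 ω with h | h <;> rw [h] <;> ring
  have hA : Integrable (fun ω => (Y1 ω i - a) * (Y1 ω j - b)) ν :=
    myIntMul ((myComp hY1L2 hY1meas i).sub (memLp_const a))
      ((myComp hY1L2 hY1meas j).sub (memLp_const b))
  have hB : Integrable (fun ω => (Y0 ω i - a) * (Y0 ω j - b)) ν :=
    myIntMul ((myComp hY0L2 hY0meas i).sub (memLp_const a))
      ((myComp hY0L2 hY0meas j).sub (memLp_const b))
  have hD : Integrable (fun ω => (Y1 ω i - a) * (Y1 ω j - b)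
      - (Y0 ω i - a) * (Y0 ω j - b)) ν := hA.sub hB
  have hZD : Integrable (fun ω => Z ω * ((Y1 ω i - a) * (Y1 ω j - b)
      - (Y0 ω i - a) * (Y0 ω j - b))) ν :=
    hD.bdd_mul (c := 1) hZmeas.aestronglyMeasurable
      (ae_of_all _ fun ω => by rcases hZ01 ω with h | h <;> simp [h])
  simp_rw [h1]
  rw [integral_add hZD hB,
    myIndepMul hindep hZmeas hY1meas hY0meas
      (φ := fun w => (w.1 i - a) * (w.1 j - b) - (w.2 i - a) * (w.2 j - b)) (by fun_prop),
    hpZ, integral_sub hA hB]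
  ring

lemma myYZ (hindep : IndepFun Z (fun ω => (Y1 ω, Y0 ω)) ν)
    (hZmeas : Measurable Z) (hY1meas : Measurable Y1) (hY0meas : Measurable Y0)
    (hZ01 : ∀ ω, Z ω = 0 ∨ Z ω = 1)
    (hY1L2 : MemLp Y1 2 ν)
    (p : ℝ) (hpZ : ∫ ω, Z ω ∂ν = p) (j : Fin L) (a : ℝ) :
    ∫ ω, ((Z ω * Y1 ω j + (1 - Z ω) * Y0 ω j) - a) * Z ω ∂ν
      = p * ((∫ ω, Y1 ω j ∂ν) - a) := by
  have h1 : ∀ ω, ((Z ω * Y1 ω j + (1 - Z ω) * Y0 ω j) - a) * Z ω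
      = Z ω * (Y1 ω j - a) := by
    intro ω; rcases hZ01 ω with h | h <;> rw [h] <;> ring
  have h1i := (myComp hY1L2 hY1meas j).integrable one_le_two
  simp_rw [h1]
  rw [myIndepMul hindep hZmeas hY1meas hY0meas
      (φ := fun w => w.1 j - a) (by fun_prop),
    hpZ, integral_sub h1i (integrable_const a), integral_const]
  simp only [measure_univ, ENNReal.toReal_one, probReal_univ, smul_eq_mul, one_mul]
end stratum

/-- Population-level part of Proposition 2: under stratified randomization,
`β_SR = E{var(Z|C)} E{cov(Y|C)}⁻¹ τ_SR`, with the stated expressions for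
`E{var(Z|C)}` and `E{cov(Y|C)}`; in particular `β_SR = 0 ↔ τ_SR = 0`. -/
theorem inverse_regression_stratified_population_equivalence
    {Ω : Type*} [MeasurableSpace Ω] (μ : Measure Ω) [IsProbabilityMeasure μ]
    (L S : ℕ) (Z : Ω → ℝ) (C : Ω → Fin S) (Y1 Y0 : Ω → Fin L → ℝ)
    (hZmeas : Measurable Z) (hCmeas : Measurable C)
    (hY1meas : Measurable Y1) (hY0meas : Measurable Y0)
    (hZ01 : ∀ ω, Z ω = 0 ∨ Z ω = 1)
    (hY1L2 : MemLp Y1 2 μ) (hY0L2 : MemLp Y0 2 μ)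
    -- conditional (within-stratum) measures
    (condμ : Fin S → Measure Ω)
    (hcondμ : condμ = fun s => ProbabilityTheory.cond μ {ω | C ω = s})
    -- stratified randomization: Z ⫫ (Y(1), Y(0)) given C
    (hindep : ∀ s, IndepFun Z (fun ω => (Y1 ω, Y0 ω)) (condμ s))
    -- stratum probabilities and propensities
    (π : Fin S → ℝ) (hπ : π = fun s => (μ {ω | C ω = s}).toReal)
    (hπpos : ∀ s, 0 < π s)
    (p : Fin S → ℝ) (hp : p = fun s => (condμ s {ω | Z ω = 1}).toReal)
    (hp01 : ∀ s, 0 < p s ∧ p s < 1)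
    -- observed outcome
    (Y : Ω → Fin L → ℝ) (hY : Y = fun ω j => Z ω * Y1 ω j + (1 - Z ω) * Y0 ω j)
    -- within-stratum moments
    (mZ : Fin S → ℝ) (hmZ : mZ = fun s => ∫ ω, Z ω ∂(condμ s))
    (mY : Fin S → Fin L → ℝ) (hmY : mY = fun s j => ∫ ω, Y ω j ∂(condμ s))
    (varZc : Fin S → ℝ) (hvarZc : varZc = fun s => ∫ ω, (Z ω - mZ s) ^ 2 ∂(condμ s))
    (covYc : Fin S → Matrix (Fin L) (Fin L) ℝ)
    (hcovYc : covYc = fun s => Matrix.of fun i j =>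
      ∫ ω, (Y ω i - mY s i) * (Y ω j - mY s j) ∂(condμ s))
    -- stratum-specific treatment effects and the variance-weighted effect
    (τs : Fin S → Fin L → ℝ)
    (hτs : τs = fun s j => ∫ ω, (Y1 ω j - Y0 ω j) ∂(condμ s))
    (τSR : Fin L → ℝ)
    (hτSR : τSR = (∑ s, π s * p s * (1 - p s))⁻¹ •
      ∑ s, (π s * p s * (1 - p s)) • τs s)
    -- population inverse regression coefficient (Frisch–Waugh–Lovell form)
    (EYtilYtil : Matrix (Fin L) (Fin L) ℝ)
    (hEYtilYtil : EYtilYtil = Matrix.of fun i j =>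
      ∫ ω, (Y ω i - mY (C ω) i) * (Y ω j - mY (C ω) j) ∂μ)
    (EYtilZ : Fin L → ℝ)
    (hEYtilZ : EYtilZ = fun j => ∫ ω, (Y ω j - mY (C ω) j) * Z ω ∂μ)
    (βSR : Fin L → ℝ) (hβSR : βSR = EYtilYtil⁻¹ *ᵥ EYtilZ)
    -- expected conditional moments
    (EvarZC : ℝ) (hEvarZC : EvarZC = ∑ s, π s * varZc s)
    (EcovYC : Matrix (Fin L) (Fin L) ℝ) (hEcovYC : EcovYC = ∑ s, π s • covYc s)
    (hEcovYCInv : IsUnit EcovYC.det)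
    -- within-stratum covariances of the potential outcomes
    (mY1 mY0 : Fin S → Fin L → ℝ)
    (hmY1 : mY1 = fun s j => ∫ ω, Y1 ω j ∂(condμ s))
    (hmY0 : mY0 = fun s j => ∫ ω, Y0 ω j ∂(condμ s))
    (cov1c cov0c : Fin S → Matrix (Fin L) (Fin L) ℝ)
    (hcov1c : cov1c = fun s => Matrix.of fun i j =>
      ∫ ω, (Y1 ω i - mY1 s i) * (Y1 ω j - mY1 s j) ∂(condμ s))
    (hcov0c : cov0c = fun s => Matrix.of fun i j =>
      ∫ ω, (Y0 ω i - mY0 s i) * (Y0 ω j - mY0 s j) ∂(condμ s)) :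
    βSR = EvarZC • (EcovYC⁻¹ *ᵥ τSR) ∧
    EvarZC = ∑ s, π s * (p s * (1 - p s)) ∧
    EcovYC = ∑ s, π s •
      ((p s * (1 - p s)) • vecMulVec (τs s) (τs s)
        + p s • cov1c s + (1 - p s) • cov0c s) ∧
    (βSR = 0 ↔ τSR = 0) := by
  -- basic setup
  have hAm : ∀ s : Fin S, MeasurableSet {ω | C ω = s} := fun s =>
    hCmeas (measurableSet_singleton s)
  have hμA : ∀ s : Fin S, μ {ω | C ω = s} ≠ 0 := by
    intro s h
    have h2 := hπpos s
    rw [hπ] at h2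
    simp [h] at h2
  have hprob : ∀ s, IsProbabilityMeasure (condμ s) := by
    intro s; rw [hcondμ]; exact cond_isProbabilityMeasure (hμA s)
  have hY1c : ∀ s, MemLp Y1 2 (condμ s) := by
    intro s; rw [hcondμ]; exact myMemL2Cond hY1L2 _ (hμA s)
  have hY0c : ∀ s, MemLp Y0 2 (condμ s) := by
    intro s; rw [hcondμ]; exact myMemL2Cond hY0L2 _ (hμA s)
  have hpZ : ∀ s, ∫ ω, Z ω ∂(condμ s) = p s := by
    intro s; haveI := hprob s; simp only [hp]; exact myZval hZmeas hZ01
  have hmZp : mZ = p := by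
    funext s; simp only [hmZ]; exact hpZ s
  have hvar : ∀ s, varZc s = p s * (1 - p s) := by
    intro s; haveI := hprob s
    simp only [hvarZc, hmZp]
    exact myZvar hZmeas hZ01 _ (hpZ s)
  have e1 : ∀ s i, (∫ x, Y1 x i ∂(condμ s)) = mY1 s i := fun s i => by simp only [hmY1]
  have e0 : ∀ s i, (∫ x, Y0 x i ∂(condμ s)) = mY0 s i := fun s i => by simp only [hmY0]
  have hmYval : ∀ s j, mY s j = p s * mY1 s j + (1 - p s) * mY0 s j := by
    intro s j; haveI := hprob s
    simp only [hmY, hY]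
    rw [myMeanY (hindep s) hZmeas hY1meas hY0meas hZ01 (hY1c s) (hY0c s) _ (hpZ s) j,
      e1 s j, e0 s j]
  have hτval : ∀ s j, τs s j = mY1 s j - mY0 s j := by
    intro s j; haveI := hprob s
    simp only [hτs]
    rw [integral_sub ((myComp (hY1c s) hY1meas j).integrable one_le_two)
      ((myComp (hY0c s) hY0meas j).integrable one_le_two), e1 s j, e0 s j]
  have hcovval : ∀ s i j, covYc s i j
      = p s * (1 - p s) * (τs s i * τs s j) + p s * cov1c s i j
        + (1 - p s) * cov0c s i j := by
    intro s i j; haveI := hprob s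
    have ec1 : (∫ ω, (Y1 ω i - mY1 s i) * (Y1 ω j - mY1 s j) ∂(condμ s))
        = cov1c s i j := by simp only [hcov1c, Matrix.of_apply]
    have ec0 : (∫ ω, (Y0 ω i - mY0 s i) * (Y0 ω j - mY0 s j) ∂(condμ s))
        = cov0c s i j := by simp only [hcov0c, Matrix.of_apply]
    simp only [hcovYc, Matrix.of_apply, hY]
    rw [myQuad (hindep s) hZmeas hY1meas hY0meas hZ01 (hY1c s) (hY0c s) _ (hpZ s)
        i j (mY s i) (mY s j),
      myShift (myComp (hY1c s) hY1meas i) (myComp (hY1c s) hY1meas j) (mY s i) (mY s j),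
      myShift (myComp (hY0c s) hY0meas i) (myComp (hY0c s) hY0meas j) (mY s i) (mY s j),
      e1 s i, e1 s j, e0 s i, e0 s j, ec1, ec0,
      hmYval s i, hmYval s j, hτval s i, hτval s j]
    ring
  have hYZval : ∀ s j, (∫ ω, (Y ω j - mY s j) * Z ω ∂(condμ s))
      = p s * (1 - p s) * τs s j := by
    intro s j; haveI := hprob s
    simp only [hY]
    rw [myYZ (hindep s) hZmeas hY1meas hY0meas hZ01 (hY1c s) _ (hpZ s) j (mY s j),
      e1 s j, hmYval s j, hτval s j]
    ring
  -- global L2 facts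
  have hZbd : ∀ᵐ ω ∂μ, ‖Z ω‖ ≤ 1 := ae_of_all _ fun ω => by
    rcases hZ01 ω with h | h <;> simp [h]
  have hZL2 : MemLp Z 2 μ :=
    (memLp_top_of_bound hZmeas.aestronglyMeasurable 1 hZbd).mono_exponent le_top
  have hYL2 : ∀ j, MemLp (fun ω => Y ω j) 2 μ := by
    intro j
    have h1 : MemLp (fun ω => Z ω * Y1 ω j) 2 μ := by
      refine (myComp hY1L2 hY1meas j).of_le_mul (c := 1)
        (hZmeas.mul ((measurable_pi_apply j).comp hY1meas)).aestronglyMeasurable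
        (ae_of_all _ fun ω => ?_)
      rcases hZ01 ω with h | h <;>
        simp [h, Real.norm_eq_abs, abs_mul, abs_nonneg]
    have h0 : MemLp (fun ω => (1 - Z ω) * Y0 ω j) 2 μ := by
      refine (myComp hY0L2 hY0meas j).of_le_mul (c := 1)
        ((measurable_const.sub hZmeas).mul
          ((measurable_pi_apply j).comp hY0meas)).aestronglyMeasurable
        (ae_of_all _ fun ω => ?_)
      rcases hZ01 ω with h | h <;>
        simp [h, Real.norm_eq_abs, abs_mul, abs_nonneg]
    simp only [hY]
    exact h1.add h0
  have hmYCL2 : ∀ i, MemLp (fun ω => mY (C ω) i) 2 μ := by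
    intro i
    refine (memLp_top_of_bound
      ((measurable_of_finite (fun s => mY s i)).comp hCmeas).aestronglyMeasurable
      (∑ s, |mY s i|) (ae_of_all _ fun ω => ?_)).mono_exponent le_top
    simpa [Real.norm_eq_abs] using Finset.single_le_sum (f := fun s => |mY s i|)
      (fun s _ => abs_nonneg _) (Finset.mem_univ (C ω))
  have hYtilL2 : ∀ i, MemLp (fun ω => Y ω i - mY (C ω) i) 2 μ := fun i =>
    (hYL2 i).sub (hmYCL2 i)
  -- strata decompositions
  have hEE : EYtilYtil = EcovYC := by
    rw [hEYtilYtil, hEcovYC]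
    ext i j
    simp only [Matrix.of_apply, Matrix.sum_apply, Matrix.smul_apply, smul_eq_mul]
    rw [myStrata C hCmeas hμA _ (myIntMul (hYtilL2 i) (hYtilL2 j))]
    refine Finset.sum_congr rfl fun s _ => ?_
    simp only [hπ]
    congr 1
    rw [show (∫ ω, (Y ω i - mY (C ω) i) * (Y ω j - mY (C ω) j) ∂(μ[|{ω | C ω = s}]))
        = ∫ ω, (Y ω i - mY s i) * (Y ω j - mY s j) ∂(μ[|{ω | C ω = s}]) from
      myCondCongr (hAm s) (fun ω hω => by
        simp only [Set.mem_setOf_eq] at hω; rw [hω])]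
    simp only [hcovYc, Matrix.of_apply, hcondμ]
  have hEZsum : EYtilZ = fun j => ∑ s, π s * (p s * (1 - p s) * τs s j) := by
    funext j
    simp only [hEYtilZ]
    rw [myStrata C hCmeas hμA _ (myIntMul (hYtilL2 j) hZL2)]
    refine Finset.sum_congr rfl fun s _ => ?_
    simp only [hπ]
    congr 1
    rw [show (∫ ω, (Y ω j - mY (C ω) j) * Z ω ∂(μ[|{ω | C ω = s}]))
        = ∫ ω, (Y ω j - mY s j) * Z ω ∂(μ[|{ω | C ω = s}]) from
      myCondCongr (hAm s) (fun ω hω => by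
        simp only [Set.mem_setOf_eq] at hω; rw [hω])]
    have h := hYZval s j
    rw [hcondμ] at h
    exact h
  -- the scalar normalizer
  haveI : Nonempty Ω := myNonempty (ν := μ)
  haveI : Nonempty (Fin S) := ⟨C (Classical.arbitrary Ω)⟩
  have hT : 0 < ∑ s, π s * p s * (1 - p s) := by
    refine Finset.sum_pos (fun s _ => ?_) Finset.univ_nonempty
    exact mul_pos (mul_pos (hπpos s) (hp01 s).1) (by linarith [(hp01 s).2])
  have hEvarT : EvarZC = ∑ s, π s * p s * (1 - p s) := by
    rw [hEvarZC]
    exact Finset.sum_congr rfl fun s _ => by rw [hvar s]; ring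
  have hEZ : EYtilZ = EvarZC • τSR := by
    have h2 : EvarZC • τSR = ∑ s, (π s * p s * (1 - p s)) • τs s := by
      rw [hτSR, hEvarT, smul_smul, mul_inv_cancel₀ hT.ne', one_smul]
    rw [h2, hEZsum]
    funext j
    simp only [Finset.sum_apply, Pi.smul_apply, smul_eq_mul]
    exact Finset.sum_congr rfl fun s _ => by ring
  have hpart1 : βSR = EvarZC • (EcovYC⁻¹ *ᵥ τSR) := by
    rw [hβSR, hEE, hEZ, Matrix.mulVec_smul]
  refine ⟨hpart1, ?_, ?_, ?_⟩
  · rw [hEvarZC]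
    exact Finset.sum_congr rfl fun s _ => by rw [hvar s]
  · rw [hEcovYC]
    refine Finset.sum_congr rfl fun s _ => ?_
    congr 1
    ext i j
    simp only [Matrix.add_apply, Matrix.smul_apply, Matrix.vecMulVec_apply, smul_eq_mul]
    rw [hcovval s i j]
  · rw [hpart1]
    have hvne : EvarZC ≠ 0 := by rw [hEvarT]; exact hT.ne'
    constructor
    · intro h
      rcases smul_eq_zero.mp h with h | h
      · exact absurd h hvne
      · have h3 : EcovYC *ᵥ (EcovYC⁻¹ *ᵥ τSR) = 0 := by rw [h, Matrix.mulVec_zero]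
        rwa [Matrix.mulVec_mulVec, Matrix.mul_nonsing_inv _ hEcovYCInv,
          Matrix.one_mulVec] at h3
    · intro h
      rw [h, Matrix.mulVec_zero, smul_zero]
end

section
/- Sample-level part of Proposition 3: For data (z_i, y_i) and strictly positive weights w_i, i = 1,...,n, with φ^w_zz ≠ 0 and φ^w_yy invertible, the weighted inverse regression coefficient satisfies β̂_OS = φ^w_zz (φ^w_yy)^{-1} τ̂_OS, and moreover φ^w_yy = φ^w_zz [ Σ̂_OS + τ̂_OS τ̂_OSᵀ ] so that, when Σ̂_OS is invertible, β̂_OS = Σ̂_OS^{-1} τ̂_OS / (1 + τ̂_OSᵀ Σ̂_OS^{-1} τ̂_OS). Here Σ̂_OS = (φ^w_zz)^{-1}[ c̃ov{Y(1)} + c̃ov{Y(0)} ], c̃ov{Y(1)} = n^{-1} Σ_i w_i z_i (y_i − ȳ_w(1))(y_i − ȳ_w(1))ᵀ, c̃ov{Y(0)} = n^{-1} Σ_i w_i (1−z_i)(y_i − ȳ_w(0))(y_i − ȳ_w(0))ᵀ, ȳ_w(1) = Σ_i w_i z_i y_i / Σ_i w_i z_i, and ȳ_w(0) = Σ_i w_i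 (1−z_i) y_i / Σ_i w_i (1−z_i). -/
open Matrix Finset

private lemma key_scalar (nn A B uj uk vj vk Pz P0 : ℝ)
    (hn : nn ≠ 0) (hA : A ≠ 0) (hB : B ≠ 0) (hC : A - B ≠ 0) :
    nn⁻¹*(Pz+P0) - (nn⁻¹*A)⁻¹*(nn⁻¹*(uj+vj))*(nn⁻¹*(uk+vk))
    = (nn⁻¹*(Pz - uj*uk/B) + nn⁻¹*(P0 - vj*vk/(A-B)))
      + (B*(A-B)/(nn*A))⁻¹ * ((nn⁻¹*uj - (nn⁻¹*A)⁻¹*(nn⁻¹*B)*(nn⁻¹*(uj+vj))) * (nn⁻¹*uk - (nn⁻¹*A)⁻¹*(nn⁻¹*B)*(nn⁻¹*(uk+vk)))) := by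
  field_simp
  ring

private lemma vecMulVec_mulVec' {L : ℕ} (a b x : Fin L → ℝ) :
    vecMulVec a b *ᵥ x = (b ⬝ᵥ x) • a := by
  ext i
  simp only [mulVec, dotProduct, vecMulVec_apply, Pi.smul_apply, smul_eq_mul]
  rw [Finset.sum_mul]
  exact Finset.sum_congr rfl fun j _ => by ring

/-- Sample-level part of Proposition 3: equivalence between the weighted inverse
regression coefficient `β̂_OS` and the weighted difference estimator `τ̂_OS`. -/
theorem inverse_regression_weighted_sample_equivalence
    (n L : ℕ) (hn : 0 < n)
    (z w : Fin n → ℝ) (y : Fin n → Fin L → ℝ)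
    (hz01 : ∀ i, z i = 0 ∨ z i = 1)
    (hw : ∀ i, 0 < w i)
    -- weighted sample moments
    (Sw11 : ℝ) (hSw11 : Sw11 = (n : ℝ)⁻¹ * ∑ i, w i)
    (Swz1 : ℝ) (hSwz1 : Swz1 = (n : ℝ)⁻¹ * ∑ i, w i * z i)
    (Swzz : ℝ) (hSwzz : Swzz = (n : ℝ)⁻¹ * ∑ i, w i * z i * z i)
    (Swy1 : Fin L → ℝ) (hSwy1 : Swy1 = fun j => (n : ℝ)⁻¹ * ∑ i, w i * y i j)
    (Swyz : Fin L → ℝ) (hSwyz : Swyz = fun j => (n : ℝ)⁻¹ * ∑ i, w i * y i j * z i)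
    (Swyy : Matrix (Fin L) (Fin L) ℝ)
    (hSwyy : Swyy = (n : ℝ)⁻¹ • ∑ i, w i • vecMulVec (y i) (y i))
    -- centered weighted moments
    (φyy : Matrix (Fin L) (Fin L) ℝ)
    (hφyy : φyy = Swyy - Sw11⁻¹ • vecMulVec Swy1 Swy1)
    (φzz : ℝ) (hφzz : φzz = Swzz - Swz1 * Sw11⁻¹ * Swz1)
    (φyz : Fin L → ℝ) (hφyz : φyz = Swyz - (Sw11⁻¹ * Swz1) • Swy1)
    -- estimators
    (βhatOS : Fin L → ℝ) (hβhatOS : βhatOS = φyy⁻¹ *ᵥ φyz)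
    (τhatOS : Fin L → ℝ) (hτhatOS : τhatOS = φzz⁻¹ • φyz)
    -- weighted group means and covariances
    (ybarw1 ybarw0 : Fin L → ℝ)
    (hybarw1 : ybarw1 = fun j => (∑ i, w i * z i * y i j) / (∑ i, w i * z i))
    (hybarw0 : ybarw0 = fun j => (∑ i, w i * (1 - z i) * y i j) / (∑ i, w i * (1 - z i)))
    (cov1 cov0 : Matrix (Fin L) (Fin L) ℝ)
    (hcov1 : cov1 = (n : ℝ)⁻¹ •
      ∑ i, (w i * z i) • vecMulVec (y i - ybarw1) (y i - ybarw1))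
    (hcov0 : cov0 = (n : ℝ)⁻¹ •
      ∑ i, (w i * (1 - z i)) • vecMulVec (y i - ybarw0) (y i - ybarw0))
    (SigmahatOS : Matrix (Fin L) (Fin L) ℝ)
    (hSigmahatOS : SigmahatOS = φzz⁻¹ • (cov1 + cov0))
    (hφzz0 : φzz ≠ 0)
    (hφyyInv : IsUnit φyy.det) :
    βhatOS = φzz • (φyy⁻¹ *ᵥ τhatOS) ∧
    φyy = φzz • (SigmahatOS + vecMulVec τhatOS τhatOS) ∧
    (IsUnit SigmahatOS.det →
      βhatOS = (1 + τhatOS ⬝ᵥ (SigmahatOS⁻¹ *ᵥ τhatOS))⁻¹ • (SigmahatOS⁻¹ *ᵥ τhatOS)) := by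
  have hnR : (n : ℝ) ≠ 0 := Nat.cast_ne_zero.mpr hn.ne'
  haveI : Nonempty (Fin n) := Fin.pos_iff_nonempty.mp hn
  have hApos : 0 < ∑ i, w i := Finset.sum_pos (fun i _ => hw i) univ_nonempty
  have hA0 : (∑ i, w i) ≠ 0 := hApos.ne'
  have hzz : ∀ i, z i * z i = z i := fun i => by rcases hz01 i with h | h <;> simp [h]
  have hSwzz' : Swzz = (n : ℝ)⁻¹ * ∑ i, w i * z i := by
    rw [hSwzz]; congr 1; exact Finset.sum_congr rfl fun i _ => by rw [mul_assoc, hzz i]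
  have hCsum : ∑ i, w i * (1 - z i) = (∑ i, w i) - ∑ i, w i * z i := by
    rw [← Finset.sum_sub_distrib]
    exact Finset.sum_congr rfl fun i _ => by ring
  have hφzzeq : φzz = (∑ i, w i * z i) * ((∑ i, w i) - ∑ i, w i * z i)
      / (↑n * ∑ i, w i) := by
    rw [hφzz, hSwzz', hSwz1, hSw11]
    field_simp
  have hB0 : (∑ i, w i * z i) ≠ 0 := by
    intro h; exact hφzz0 (by rw [hφzzeq, h, zero_mul, zero_div])
  have hC0 : (∑ i, w i) - (∑ i, w i * z i) ≠ 0 := by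
    intro h; exact hφzz0 (by rw [hφzzeq, h, mul_zero, zero_div])
  have core : φyy = cov1 + cov0 + φzz⁻¹ • vecMulVec φyz φyz := by
    ext j k
    have hsum1 : ∀ m, ∑ i, w i * y i m
        = (∑ i, w i * z i * y i m) + ∑ i, w i * (1 - z i) * y i m := fun m => by
      rw [← Finset.sum_add_distrib]; exact Finset.sum_congr rfl fun i _ => by ring
    have hsumP : ∑ i, w i * (y i j * y i k)
        = (∑ i, w i * z i * (y i j * y i k)) + ∑ i, w i * (1 - z i) * (y i j * y i k) := by
      rw [← Finset.sum_add_distrib]; exact Finset.sum_congr rfl fun i _ => by ring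
    have hyz : ∀ m, ∑ i, w i * y i m * z i = ∑ i, w i * z i * y i m := fun m =>
      Finset.sum_congr rfl fun i _ => by ring
    have hcov1e : (∑ i, (w i * z i) • vecMulVec (y i - ybarw1) (y i - ybarw1)) j k
        = (∑ i, w i * z i * (y i j * y i k))
          - (∑ i, w i * z i * y i j) * (∑ i, w i * z i * y i k) / (∑ i, w i * z i) := by
      rw [Matrix.sum_apply]
      simp only [Matrix.smul_apply, vecMulVec_apply, Pi.sub_apply, smul_eq_mul, hybarw1]
      have e : ∀ i ∈ (univ : Finset (Fin n)),
          w i * z i * ((y i j - (∑ i, w i * z i * y i j) / (∑ i, w i * z i))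
              * (y i k - (∑ i, w i * z i * y i k) / (∑ i, w i * z i)))
          = w i * z i * (y i j * y i k)
            - (∑ i, w i * z i * y i j) / (∑ i, w i * z i) * (w i * z i * y i k)
            - (∑ i, w i * z i * y i k) / (∑ i, w i * z i) * (w i * z i * y i j)
            + (∑ i, w i * z i * y i j) / (∑ i, w i * z i)
              * ((∑ i, w i * z i * y i k) / (∑ i, w i * z i)) * (w i * z i) := fun i _ => by
        ring
      rw [Finset.sum_congr rfl e, Finset.sum_add_distrib, Finset.sum_sub_distrib,
        Finset.sum_sub_distrib, ← Finset.mul_sum, ← Finset.mul_sum, ← Finset.mul_sum]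
      field_simp
      ring
    have hcov0e : (∑ i, (w i * (1 - z i)) • vecMulVec (y i - ybarw0) (y i - ybarw0)) j k
        = (∑ i, w i * (1 - z i) * (y i j * y i k))
          - (∑ i, w i * (1 - z i) * y i j) * (∑ i, w i * (1 - z i) * y i k)
            / ((∑ i, w i) - ∑ i, w i * z i) := by
      rw [Matrix.sum_apply]
      simp only [Matrix.smul_apply, vecMulVec_apply, Pi.sub_apply, smul_eq_mul, hybarw0]
      have e : ∀ i ∈ (univ : Finset (Fin n)),
          w i * (1 - z i) * ((y i j - (∑ i, w i * (1 - z i) * y i j) / (∑ i, w i * (1 - z i)))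
              * (y i k - (∑ i, w i * (1 - z i) * y i k) / (∑ i, w i * (1 - z i))))
          = w i * (1 - z i) * (y i j * y i k)
            - (∑ i, w i * (1 - z i) * y i j) / (∑ i, w i * (1 - z i)) * (w i * (1 - z i) * y i k)
            - (∑ i, w i * (1 - z i) * y i k) / (∑ i, w i * (1 - z i)) * (w i * (1 - z i) * y i j)
            + (∑ i, w i * (1 - z i) * y i j) / (∑ i, w i * (1 - z i))
              * ((∑ i, w i * (1 - z i) * y i k) / (∑ i, w i * (1 - z i))) * (w i * (1 - z i)) :=
        fun i _ => by ring
      rw [Finset.sum_congr rfl e, Finset.sum_add_distrib, Finset.sum_sub_distrib,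
        Finset.sum_sub_distrib, ← Finset.mul_sum, ← Finset.mul_sum, ← Finset.mul_sum, hCsum]
      have hC0' : (∑ i, w i * (1 - z i)) ≠ 0 := by rw [hCsum]; exact hC0
      field_simp [hC0']
      ring
    have hSwyye : Swyy j k = (n : ℝ)⁻¹ * ((∑ i, w i * z i * (y i j * y i k))
        + ∑ i, w i * (1 - z i) * (y i j * y i k)) := by
      rw [hSwyy, Matrix.smul_apply, Matrix.sum_apply]
      simp only [Matrix.smul_apply, vecMulVec_apply, smul_eq_mul]
      rw [← hsumP]
    have hφyze : ∀ m, φyz m = (n:ℝ)⁻¹ * (∑ i, w i * z i * y i m)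
        - ((n:ℝ)⁻¹ * ∑ i, w i)⁻¹ * ((n:ℝ)⁻¹ * ∑ i, w i * z i)
          * ((n:ℝ)⁻¹ * ((∑ i, w i * z i * y i m) + ∑ i, w i * (1 - z i) * y i m)) := fun m => by
      simp only [hφyz, Pi.sub_apply, Pi.smul_apply, hSwyz, hSwy1, hSw11, hSwz1, smul_eq_mul]
      rw [hyz m, hsum1 m]
      try ring
    rw [hφyy, Matrix.sub_apply, Matrix.smul_apply, vecMulVec_apply, hSwyye]
    simp only [hSwy1, hSw11, smul_eq_mul]
    rw [hcov1, hcov0, Matrix.add_apply, Matrix.add_apply, Matrix.smul_apply, Matrix.smul_apply,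
      Matrix.smul_apply, vecMulVec_apply, hcov1e, hcov0e, hφyze j, hφyze k, hφzzeq]
    simp only [smul_eq_mul]
    rw [hsum1 j, hsum1 k]
    linear_combination key_scalar (n:ℝ) (∑ i, w i) (∑ i, w i * z i)
      (∑ i, w i * z i * y i j) (∑ i, w i * z i * y i k)
      (∑ i, w i * (1 - z i) * y i j) (∑ i, w i * (1 - z i) * y i k)
      (∑ i, w i * z i * (y i j * y i k)) (∑ i, w i * (1 - z i) * (y i j * y i k))
      hnR hA0 hB0 hC0
  have part1 : βhatOS = φzz • (φyy⁻¹ *ᵥ τhatOS) := by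
    rw [hβhatOS, hτhatOS, mulVec_smul, smul_smul, mul_inv_cancel₀ hφzz0, one_smul]
  have hττ : vecMulVec τhatOS τhatOS = (φzz⁻¹ * φzz⁻¹) • vecMulVec φyz φyz := by
    ext j k
    simp only [hτhatOS, vecMulVec_apply, Matrix.smul_apply, Pi.smul_apply, smul_eq_mul]
    ring
  have part2 : φyy = φzz • (SigmahatOS + vecMulVec τhatOS τhatOS) := by
    rw [hSigmahatOS, hττ, smul_add, smul_smul, smul_smul, mul_inv_cancel₀ hφzz0, one_smul,
      core]
    congr 1
    rw [← mul_assoc, mul_inv_cancel₀ hφzz0, one_mul]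
  refine ⟨part1, part2, fun hS => ?_⟩
  set M : Matrix (Fin L) (Fin L) ℝ := SigmahatOS + vecMulVec τhatOS τhatOS with hMdef
  have hφyyM : φyy = φzz • M := part2
  have hMdet : IsUnit M.det := by
    rw [hφyyM, Matrix.det_smul] at hφyyInv
    rcases mul_ne_zero_iff.mp (isUnit_iff_ne_zero.mp hφyyInv) with ⟨-, h⟩
    exact isUnit_iff_ne_zero.mpr h
  have hMβ : M *ᵥ βhatOS = τhatOS := by
    have h1 : φyy *ᵥ βhatOS = φyz := by
      rw [hβhatOS, mulVec_mulVec, mul_nonsing_inv _ hφyyInv, one_mulVec]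
    rw [hφyyM, smul_mulVec] at h1
    rw [hτhatOS, ← h1, smul_smul, inv_mul_cancel₀ hφzz0, one_smul]
  have hβM : βhatOS = M⁻¹ *ᵥ τhatOS := by
    rw [← hMβ, mulVec_mulVec, nonsing_inv_mul _ hMdet, one_mulVec]
  set v := SigmahatOS⁻¹ *ᵥ τhatOS with hvdef
  set c := τhatOS ⬝ᵥ v with hcdef
  have hSv : SigmahatOS *ᵥ v = τhatOS := by
    rw [hvdef, mulVec_mulVec, mul_nonsing_inv _ hS, one_mulVec]
  have hMv : M *ᵥ v = (1 + c) • τhatOS := by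
    rw [hMdef, add_mulVec, hSv, vecMulVec_mulVec', ← hcdef, add_smul, one_smul]
  have h1c : (1 : ℝ) + c ≠ 0 := by
    intro h0
    have hv0 : v = 0 := by
      have h1 : M *ᵥ v = 0 := by rw [hMv, h0, zero_smul]
      have h2 : M⁻¹ *ᵥ (M *ᵥ v) = v := by
        rw [mulVec_mulVec, nonsing_inv_mul _ hMdet, one_mulVec]
      rw [h1, mulVec_zero] at h2
      exact h2.symm
    have hτ0 : τhatOS = 0 := by rw [← hSv, hv0, mulVec_zero]
    rw [hcdef, hτ0, zero_dotProduct] at h0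
    norm_num at h0
  have hMgoal : M *ᵥ (((1 : ℝ) + c)⁻¹ • v) = τhatOS := by
    rw [mulVec_smul, hMv, smul_smul, inv_mul_cancel₀ h1c, one_smul]
  rw [hβM, ← hMgoal, mulVec_mulVec, nonsing_inv_mul _ hMdet, one_mulVec]
end

section
/- Proposition S1 (equivalence with covariates in completely randomized experiments): (a) For data (z_i, x_i, y_i), i = 1,...,n, with yᵀ(I_n − H_x)y invertible and zᵀ(I_n − H_x)z ≠ 0, the covariate-adjusted inverse regression coefficient satisfies β̂_A = {n^{-1} zᵀ(I_n − H_x) z}{n^{-1} yᵀ(I_n − H_x) y}^{-1} τ̂_A. (b) Under complete randomization with Z independent of (Y(1), Y(0), X), treatment probability p = P(Z=1) ∈ (0,1), cov(X) invertible, and cov(Y) − cov(Y,X)cov(X)^{-1}cov(X,Y) invertible, the population coefficient satisfies β_A = var(Z) [cov(Y) − cov(Y,X) cov(X)^{-1} cov(X,Y)]^{-1} τ. -/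
open MeasureTheory ProbabilityTheory Matrix Finset

lemma cov_helper {Ω : Type*} [MeasurableSpace Ω] (μ : Measure Ω) [IsProbabilityMeasure μ]
    (f g : Ω → ℝ) (hf : Integrable f μ) (hg : Integrable g μ)
    (hfg : Integrable (fun ω => f ω * g ω) μ) :
    ∫ ω, (f ω - ∫ x, f x ∂μ) * (g ω - ∫ x, g x ∂μ) ∂μ =
      (∫ ω, f ω * g ω ∂μ) - (∫ x, f x ∂μ) * (∫ x, g x ∂μ) := by
  set a := ∫ x, f x ∂μ with ha
  set b := ∫ x, g x ∂μ with hb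
  have hpt : ∀ ω, (f ω - a) * (g ω - b) = f ω * g ω - (a * g ω + b * f ω) + a * b := by
    intro ω; ring
  simp_rw [hpt]
  have h1 : Integrable (fun ω => a * g ω + b * f ω) μ := by
    exact (hg.const_mul a).add (hf.const_mul b)
  have h2 : Integrable (fun ω => f ω * g ω - (a * g ω + b * f ω)) μ := by
    exact hfg.sub h1
  rw [integral_add h2 (integrable_const _), integral_sub hfg h1,
    integral_add (hg.const_mul a) (hf.const_mul b),
    MeasureTheory.integral_const_mul, MeasureTheory.integral_const_mul, integral_const]
  simp only [measure_univ, probReal_univ, ENNReal.toReal_one, smul_eq_mul, one_mul, ← ha, ← hb]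
  ring


lemma indep_integral_mul {Ω : Type*} [MeasurableSpace Ω] {μ : Measure Ω} {f g : Ω → ℝ}
    (h : IndepFun f g μ) (hf : Integrable f μ) (hg : Integrable g μ) :
    ∫ ω, f ω * g ω ∂μ = (∫ ω, f ω ∂μ) * ∫ ω, g ω ∂μ :=
  h.integral_fun_mul_eq_mul_integral hf.1 hg.1

/-- Proposition S1: covariate-adjusted equivalence in completely randomized experiments.
(a) the sample identity `β̂_A = {n⁻¹zᵀ(I−H_x)z}{n⁻¹yᵀ(I−H_x)y}⁻¹ τ̂_A`;
(b) under complete randomization,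
`β_A = var(Z)[cov(Y) − cov(Y,X)cov(X)⁻¹cov(X,Y)]⁻¹ τ`. -/
theorem inverse_regression_covariate_adjusted_equivalence
    -- (a) sample-level data
    (n K L : ℕ) (hn : 0 < n)
    (zf : Fin n → ℝ) (xm : Matrix (Fin n) (Fin K) ℝ) (ym : Matrix (Fin n) (Fin L) ℝ)
    (hzf01 : ∀ i, zf i = 0 ∨ zf i = 1)
    (Q : Matrix (Fin n) (Fin (K + 1)) ℝ)
    (hQ : Q = Matrix.of fun i k => Fin.cons (1 : ℝ) (fun j => xm i j) k)
    (Hx : Matrix (Fin n) (Fin n) ℝ) (hHx : Hx = Q * (Qᵀ * Q)⁻¹ * Qᵀ)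
    (βhatA : Fin L → ℝ)
    (hβhatA : βhatA = (ymᵀ * (1 - Hx) * ym)⁻¹ *ᵥ (ymᵀ *ᵥ ((1 - Hx) *ᵥ zf)))
    (τhatA : Fin L → ℝ)
    (hτhatA : τhatA = (zf ⬝ᵥ ((1 - Hx) *ᵥ zf))⁻¹ • (ymᵀ *ᵥ ((1 - Hx) *ᵥ zf)))
    (hzz : zf ⬝ᵥ ((1 - Hx) *ᵥ zf) ≠ 0)
    (hyyInv : IsUnit (ymᵀ * (1 - Hx) * ym).det)
    -- (b) population-level data
    {Ω : Type*} [MeasurableSpace Ω] (μ : Measure Ω) [IsProbabilityMeasure μ]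
    (Z : Ω → ℝ) (X : Ω → Fin K → ℝ) (Y1 Y0 : Ω → Fin L → ℝ)
    (hZmeas : Measurable Z) (hXmeas : Measurable X)
    (hY1meas : Measurable Y1) (hY0meas : Measurable Y0)
    (hZ01 : ∀ ω, Z ω = 0 ∨ Z ω = 1)
    (hXL2 : MemLp X 2 μ) (hY1L2 : MemLp Y1 2 μ) (hY0L2 : MemLp Y0 2 μ)
    -- complete randomization: Z ⫫ (Y(1), Y(0), X)
    (hindep : IndepFun Z (fun ω => (Y1 ω, Y0 ω, X ω)) μ)
    (p : ℝ) (hp : p = (μ {ω | Z ω = 1}).toReal) (hp0 : 0 < p) (hp1 : p < 1)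
    (Y : Ω → Fin L → ℝ) (hY : Y = fun ω j => Z ω * Y1 ω j + (1 - Z ω) * Y0 ω j)
    (τ : Fin L → ℝ) (hτ : τ = fun j => ∫ ω, (Y1 ω j - Y0 ω j) ∂μ)
    (EZ : ℝ) (hEZ : EZ = ∫ ω, Z ω ∂μ)
    (varZ : ℝ) (hvarZ : varZ = ∫ ω, (Z ω - EZ) ^ 2 ∂μ)
    (EY : Fin L → ℝ) (hEY : EY = fun j => ∫ ω, Y ω j ∂μ)
    (EX : Fin K → ℝ) (hEX : EX = fun k => ∫ ω, X ω k ∂μ)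
    (covY : Matrix (Fin L) (Fin L) ℝ)
    (hcovY : covY = Matrix.of fun i j => ∫ ω, (Y ω i - EY i) * (Y ω j - EY j) ∂μ)
    (covX : Matrix (Fin K) (Fin K) ℝ)
    (hcovX : covX = Matrix.of fun k l => ∫ ω, (X ω k - EX k) * (X ω l - EX l) ∂μ)
    (covYX : Matrix (Fin L) (Fin K) ℝ)
    (hcovYX : covYX = Matrix.of fun i k => ∫ ω, (Y ω i - EY i) * (X ω k - EX k) ∂μ)
    (covXY : Matrix (Fin K) (Fin L) ℝ) (hcovXY : covXY = covYXᵀ)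
    (covYZ : Fin L → ℝ)
    (hcovYZ : covYZ = fun i => ∫ ω, (Y ω i - EY i) * (Z ω - EZ) ∂μ)
    (covXZ : Fin K → ℝ)
    (hcovXZ : covXZ = fun k => ∫ ω, (X ω k - EX k) * (Z ω - EZ) ∂μ)
    (hcovXInv : IsUnit covX.det)
    (Φyyx : Matrix (Fin L) (Fin L) ℝ)
    (hΦyyx : Φyyx = covY - covYX * covX⁻¹ * covXY)
    (hΦyyxInv : IsUnit Φyyx.det)
    -- population covariate-adjusted inverse regression coefficient
    (βA : Fin L → ℝ)
    (hβA : βA = Φyyx⁻¹ *ᵥ (covYZ - covYX *ᵥ (covX⁻¹ *ᵥ covXZ))) :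
    βhatA = ((n : ℝ)⁻¹ * (zf ⬝ᵥ ((1 - Hx) *ᵥ zf))) •
      (((n : ℝ)⁻¹ • (ymᵀ * (1 - Hx) * ym))⁻¹ *ᵥ τhatA) ∧
    βA = varZ • (Φyyx⁻¹ *ᵥ τ) := by
  constructor
  · -- Part (a)
    have hn' : (n : ℝ) ≠ 0 := Nat.cast_ne_zero.mpr hn.ne'
    set M := ymᵀ * (1 - Hx) * ym with hM
    set v := ymᵀ *ᵥ ((1 - Hx) *ᵥ zf) with hv
    set c := zf ⬝ᵥ ((1 - Hx) *ᵥ zf) with hc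
    have hninv : ((n : ℝ)⁻¹ • M)⁻¹ = (n : ℝ) • M⁻¹ := by
      apply Matrix.inv_eq_right_inv
      rw [smul_mul_assoc, mul_smul_comm, Matrix.mul_nonsing_inv _ hyyInv, smul_smul,
        inv_mul_cancel₀ hn', one_smul]
    rw [hβhatA, hτhatA, hninv, Matrix.mulVec_smul, Matrix.smul_mulVec, smul_smul,
      smul_smul]
    rw [show (n : ℝ)⁻¹ * c * c⁻¹ * (n : ℝ) = 1 by field_simp, one_smul]
  · -- Part (b)
    -- integrability facts
    have hZae : AEStronglyMeasurable Z μ := hZmeas.aestronglyMeasurable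
    have intZ : Integrable Z μ := by
      refine (integrable_const (1 : ℝ)).mono' hZae (ae_of_all _ fun ω => ?_)
      rcases hZ01 ω with h | h <;> simp [h]
    have int1 : ∀ i, Integrable (fun ω => Y1 ω i) μ := fun i =>
      ((ContinuousLinearMap.proj (R := ℝ) (φ := fun _ : Fin L => ℝ) i).comp_memLp'
        hY1L2).integrable one_le_two
    have int0 : ∀ i, Integrable (fun ω => Y0 ω i) μ := fun i =>
      ((ContinuousLinearMap.proj (R := ℝ) (φ := fun _ : Fin L => ℝ) i).comp_memLp'
        hY0L2).integrable one_le_two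
    have intX : ∀ k, Integrable (fun ω => X ω k) μ := fun k =>
      ((ContinuousLinearMap.proj (R := ℝ) (φ := fun _ : Fin K => ℝ) k).comp_memLp'
        hXL2).integrable one_le_two
    have intZ1 : ∀ i, Integrable (fun ω => Z ω * Y1 ω i) μ := fun i =>
      (int1 i).bdd_mul (c := 1) hZae (ae_of_all _ fun ω => by rcases hZ01 ω with h | h <;> simp [h])
    have intZ0 : ∀ i, Integrable (fun ω => (1 - Z ω) * Y0 ω i) μ := fun i =>
      (int0 i).bdd_mul (c := 1) (aestronglyMeasurable_const.sub hZae)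
        (ae_of_all _ fun ω => by rcases hZ01 ω with h | h <;> simp [h])
    have intY : ∀ i, Integrable (fun ω => Y ω i) μ := fun i => by
      rw [hY]; exact (intZ1 i).add (intZ0 i)
    have intYZ : ∀ i, Integrable (fun ω => Y ω i * Z ω) μ := fun i =>
      (intY i).bdd_mul (c := 1) hZae (ae_of_all _ fun ω => by
        rcases hZ01 ω with h | h <;> simp [h]) |>.congr (ae_of_all _ fun ω => mul_comm _ _)
    have intXZ : ∀ k, Integrable (fun ω => X ω k * Z ω) μ := fun k =>
      (intX k).bdd_mul (c := 1) hZae (ae_of_all _ fun ω => by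
        rcases hZ01 ω with h | h <;> simp [h]) |>.congr (ae_of_all _ fun ω => mul_comm _ _)
    -- independence of Z from components
    have indY1 : ∀ i, IndepFun Z (fun ω => Y1 ω i) μ := fun i =>
      hindep.comp measurable_id ((measurable_pi_apply i).comp measurable_fst)
    have indY0 : ∀ i, IndepFun Z (fun ω => Y0 ω i) μ := fun i =>
      hindep.comp measurable_id
        ((measurable_pi_apply i).comp (measurable_fst.comp measurable_snd))
    have indX : ∀ k, IndepFun Z (fun ω => X ω k) μ := fun k =>
      hindep.comp measurable_id
        ((measurable_pi_apply k).comp (measurable_snd.comp measurable_snd))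
    -- E[Z] = p
    have hsmeas : MeasurableSet {ω | Z ω = 1} := hZmeas (measurableSet_singleton 1)
    have hEZp : EZ = p := by
      rw [hEZ, hp]
      have : Z = Set.indicator {ω | Z ω = 1} (fun _ => (1 : ℝ)) := by
        funext ω
        rcases hZ01 ω with h | h <;> simp [Set.indicator_apply, h]
      rw [this, integral_indicator_const _ hsmeas]
      simp [Measure.real]
    -- Z * Z = Z
    have hZsq : ∀ ω, Z ω * Z ω = Z ω := fun ω => by rcases hZ01 ω with h | h <;> simp [h]
    -- var Z = p - p^2
    have hvarZp : varZ = p - p ^ 2 := by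
      rw [hvarZ]
      have h1 : ∀ ω, (Z ω - EZ) ^ 2 = (Z ω - ∫ x, Z x ∂μ) * (Z ω - ∫ x, Z x ∂μ) := by
        intro ω; rw [← hEZ]; ring
      simp_rw [h1]
      rw [cov_helper μ Z Z intZ intZ (by simpa only [hZsq] using intZ)]
      simp_rw [hZsq]
      rw [← hEZ, hEZp]; ring
    -- covXZ = 0
    have hcovXZ0 : covXZ = 0 := by
      rw [hcovXZ]; funext k
      have : ∀ ω, (X ω k - EX k) * (Z ω - EZ)
          = (X ω k - ∫ x, X x k ∂μ) * (Z ω - ∫ x, Z x ∂μ) := by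
        intro ω; rw [hEX, hEZ]
      simp_rw [this]
      rw [cov_helper μ (fun ω => X ω k) Z (intX k) intZ (intXZ k),
        indep_integral_mul (indX k).symm (intX k) intZ]
      simp
    -- E[Y_i Z] = p * E[Y1_i]
    have hYZint : ∀ i, (∫ ω, Y ω i * Z ω ∂μ) = p * ∫ ω, Y1 ω i ∂μ := by
      intro i
      have h1 : ∀ ω, Y ω i * Z ω = Z ω * Y1 ω i := by
        intro ω
        rcases hZ01 ω with h | h <;> simp [hY, h]
      simp_rw [h1]
      rw [indep_integral_mul (indY1 i) intZ (int1 i), ← hEZ, hEZp]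
    -- E[Y_i] = p E[Y1_i] + (1-p) E[Y0_i]
    have hEYi : ∀ i, EY i = p * (∫ ω, Y1 ω i ∂μ) + (1 - p) * ∫ ω, Y0 ω i ∂μ := by
      intro i
      rw [hEY]
      simp only [hY]
      rw [integral_add (intZ1 i) (intZ0 i), indep_integral_mul (indY1 i) intZ (int1 i)]
      have h2 : ∀ ω, (1 - Z ω) * Y0 ω i = Y0 ω i - Z ω * Y0 ω i := fun ω => by ring
      simp_rw [h2]
      rw [integral_sub (int0 i) (by exact (indY0 i).integrable_mul intZ (int0 i)),
        indep_integral_mul (indY0 i) intZ (int0 i), ← hEZ, hEZp]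
      ring
    -- covYZ = varZ • τ
    have hcovYZv : covYZ = varZ • τ := by
      rw [hcovYZ]; funext i
      have : ∀ ω, (Y ω i - EY i) * (Z ω - EZ)
          = (Y ω i - ∫ x, Y x i ∂μ) * (Z ω - ∫ x, Z x ∂μ) := by
        intro ω; rw [hEY, hEZ]
      simp_rw [this]
      rw [cov_helper μ (fun ω => Y ω i) Z (intY i) intZ (intYZ i), hYZint i]
      have hEYi' := hEYi i
      rw [hEY] at hEYi'
      simp only [Pi.smul_apply, smul_eq_mul, hτ, hvarZp,
        integral_sub (int1 i) (int0 i), hEYi', ← hEZ, hEZp]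
      ring
    rw [hβA, hcovXZ0, Matrix.mulVec_zero, Matrix.mulVec_zero, sub_zero, hcovYZv,
      Matrix.mulVec_smul]
end
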